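/- Let K be a field of characteristic ≠ 2, 3, let A be a finite-dimensional commutative K-algebra (a K-vector space with K-bilinear multiplication satisfying xy = yx, not assumed associative or unital), and let B be an anticommutative K-algebra (ab = −ba). Let Br : (A ⊗_K B) × (A ⊗_K B) → A ⊗_K B be the unique K-bilinear map with Br(x ⊗ a, y ⊗ b) = xy ⊗ ab − yx ⊗ ba for all x, y ∈ A and a, b ∈ B. Then a K-linear map Φ : A ⊗ B → A ⊗ B satisfies Br(Br(u,v), Φ(w)) + Br(Br(w,u), Φ(v)) + Br(Br(v,w), Φ(u)) = 0 for all u, v, w ∈ A ⊗ B if and only if Φ lies in the K-linear span of the maps α ⊗ β (the tensor product of linear maps α : A → A and β : B → B) where either (i) α is Hom-Lie on A and β is Hom-cyclic on B, or (ii) α is Hom-2-nilpotent on A and β is arbitrary, or (iii) α is Hom-cyclic on A and β is Hom-Lie on B, or (iv) α is arbitrary and β is Hom-2-nilpotent on B. -/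

import Mathlib

open TensorProduct

/-- Hom-Lie structure on a (nonassociative) algebra. -/
def IsHomLie {K A : Type*} [Field K] [NonUnitalNonAssocRing A] [Module K A]
    (α : A →ₗ[K] A) : Prop :=
  ∀ x y z : A, (x * y) * α z + (z * x) * α y + (y * z) * α x = 0

/-- Hom-cyclic structure on a (nonassociative) algebra. -/
def IsHomCyclic {K A : Type*} [Field K] [NonUnitalNonAssocRing A] [Module K A]
    (α : A →ₗ[K] A) : Prop :=
  ∀ x y z : A, (x * y) * α z = (z * x) * α y

/-- Hom-2-nilpotent structure on a (nonassociative) algebra. -/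
def IsHom2Nilpotent {K A : Type*} [Field K] [NonUnitalNonAssocRing A] [Module K A]
    (α : A →ₗ[K] A) : Prop :=
  ∀ x y z : A, (x * y) * α z = 0

set_option linter.unusedSectionVars false

section AuxDefs

variable {K A : Type*} [Field K]
  [NonUnitalNonAssocRing A] [Module K A] [SMulCommClass K A A] [IsScalarTower K A A]

lemma smul_cancel_of_ne_zero {V : Type*} [AddCommGroup V] [Module K V] {c : K} (hc : c ≠ 0)
    {v : V} (h : c • v = 0) : v = 0 := by
  have := congrArg (fun w => c⁻¹ • w) h
  simpa [smul_smul, inv_mul_cancel₀ hc] using this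

/-- The cyclic-sum trilinear form attached to an endomorphism. -/
def cyc3 : (A →ₗ[K] A) →ₗ[K] (A → A → A → A) where
  toFun α := fun x y z => x * y * α z + z * x * α y + y * z * α x
  map_add' α β := by
    funext x y z
    simp only [LinearMap.add_apply, mul_add, Pi.add_apply]
    abel
  map_smul' c α := by
    funext x y z
    simp only [LinearMap.smul_apply, RingHom.id_apply, Pi.smul_apply, mul_smul_comm, smul_add]

/-- The "non-cyclic part" trilinear form attached to an endomorphism. -/
def dz3 : (A →ₗ[K] A) →ₗ[K] (A → A → A → A) where
  toFun α := fun x y z => (2 : K) • (x * y * α z) - z * x * α y - y * z * α x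
  map_add' α β := by
    funext x y z
    simp only [LinearMap.add_apply, mul_add, Pi.add_apply, smul_add]
    abel
  map_smul' c α := by
    funext x y z
    simp only [LinearMap.smul_apply, RingHom.id_apply, Pi.smul_apply, mul_smul_comm, smul_sub,
      smul_comm c]

lemma cyc3_eq_zero_iff {α : A →ₗ[K] A} : cyc3 α = 0 ↔ IsHomLie α := by
  constructor
  · intro h x y z
    have := congrFun (congrFun (congrFun h x) y) z
    simpa [cyc3] using this
  · intro h
    funext x y z
    simpa [cyc3] using h x y z

lemma dz3_eq_zero_iff (h3 : (3 : K) ≠ 0) {α : A →ₗ[K] A} :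
    dz3 α = 0 ↔ IsHomCyclic α := by
  constructor
  · intro h x y z
    have h' : ∀ x y z : A, (2 : K) • (x * y * α z) - z * x * α y - y * z * α x = 0 := by
      intro x y z
      have := congrFun (congrFun (congrFun h x) y) z
      simpa [dz3] using this
    have e1 := h' x y z
    have e2 := h' z x y
    have key : (3 : K) • (x * y * α z - z * x * α y) =
        ((2 : K) • (x * y * α z) - z * x * α y - y * z * α x) -
          ((2 : K) • (z * x * α y) - y * z * α x - x * y * α z) := by
      module
    rw [e1, e2, sub_zero] at key
    have := smul_cancel_of_ne_zero h3 key
    exact sub_eq_zero.mp this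
  · intro h
    funext x y z
    have e1 : z * x * α y = x * y * α z := (h x y z).symm
    have e2 : y * z * α x = x * y * α z := h y z x
    simp only [dz3, LinearMap.coe_mk, AddHom.coe_mk, e1, e2]
    have : (2 : K) • (x * y * α z) - x * y * α z - x * y * α z = 0 := by module
    simpa using this

lemma hom2nil_of (h3 : (3 : K) ≠ 0) {α : A →ₗ[K] A}
    (hl : IsHomLie α) (hc : IsHomCyclic α) : IsHom2Nilpotent α := by
  intro x y z
  have h1 := hl x y z
  rw [← hc x y z, hc y z x] at h1
  have : (3 : K) • (x * y * α z) = x * y * α z + x * y * α z + x * y * α z := by module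
  rw [h1] at this
  exact smul_cancel_of_ne_zero h3 this

end AuxDefs

section Separation

variable {K A B : Type*} [Field K]
  [AddCommGroup A] [Module K A] [AddCommGroup B] [Module K B]

/-- If `∑ v k ⊗ u k = 0` with `u` linearly independent, then all `v k = 0`. -/
lemma tmul_sum_eq_zero_of_indep {ι : Type*} [Fintype ι] {v : ι → A} {u : ι → B}
    (hu : LinearIndependent K u) (h : ∑ k, v k ⊗ₜ[K] u k = (0 : A ⊗[K] B)) :
    ∀ k, v k = 0 := by
  classical
  intro k0
  set S := Submodule.span K (Set.range u) with hS
  obtain ⟨C, hC⟩ := Submodule.exists_isCompl S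
  let bS := Module.Basis.span hu
  let f : B →ₗ[K] K := (bS.coord k0) ∘ₗ (S.linearProjOfIsCompl C hC)
  have hfu : ∀ k, f (u k) = if k = k0 then 1 else 0 := by
    intro k
    have h1 : (S.linearProjOfIsCompl C hC) (u k) = bS k := by
      have : u k = ↑(bS k) := congrArg Subtype.val (Module.Basis.span_apply hu k).symm
      rw [this]
      exact Submodule.linearProjOfIsCompl_apply_left hC (bS k)
    simp only [f, LinearMap.comp_apply, h1, Module.Basis.coord_apply, Module.Basis.repr_self]
    simp [Finsupp.single_apply]
  let g : A ⊗[K] B →ₗ[K] A :=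
    (TensorProduct.rid K A).toLinearMap ∘ₗ (LinearMap.lTensor A f)
  have hg : g (∑ k, v k ⊗ₜ[K] u k) = v k0 := by
    rw [map_sum]
    have : ∀ k, g (v k ⊗ₜ[K] u k) = f (u k) • v k := by
      intro k
      simp [g, TensorProduct.rid_tmul]
    simp only [this, hfu]
    simp [ite_smul]
  rw [h, map_zero] at hg
  exact hg.symm

/-- Separation lemma: if `∑ P i (x,y,z) ⊗ Q i (a,b,c) = 0` for all arguments and the `P i` are
linearly independent (as functions), then all `Q i` vanish. -/
lemma separation {A' B' : Type*} {ι : Type*} [Fintype ι]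
    {P : ι → (A' → A' → A' → A)} (hP : LinearIndependent K P)
    (Q : ι → (B' → B' → B' → B))
    (h : ∀ (x y z : A') (a b c : B'), ∑ i, (P i x y z) ⊗ₜ[K] (Q i a b c) = (0 : A ⊗[K] B)) :
    ∀ i, Q i = 0 := by
  classical
  intro i0
  funext a b c
  set w : ι → B := fun i => Q i a b c with hw
  suffices hws : ∀ i, w i = 0 from hws i0
  set S := Submodule.span K (Set.range w) with hS
  have : FiniteDimensional K S := FiniteDimensional.span_of_finite K (Set.finite_range w)
  let bS := Module.finBasis K S
  set n := Module.finrank K S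
  let wS : ι → S := fun i => ⟨w i, Submodule.subset_span (Set.mem_range_self i)⟩
  let cf : ι → Fin n → K := fun i k => bS.repr (wS i) k
  have hw_eq : ∀ i, w i = ∑ k, cf i k • (bS k : B) := by
    intro i
    calc w i = ↑(wS i) := rfl
      _ = ↑(∑ k, (bS.repr (wS i)) k • bS k) := by rw [bS.sum_repr (wS i)]
      _ = ∑ k, cf i k • (bS k : B) := by
          simp only [cf, Submodule.coe_sum, Submodule.coe_smul]
  have hindep : LinearIndependent K (fun k => (bS k : B)) :=
    bS.linearIndependent.map' S.subtype (Submodule.ker_subtype S)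
  have hcoef : ∀ (k : Fin n) (x y z : A'), ∑ i, cf i k • P i x y z = 0 := by
    intro k x y z
    have h0 := h x y z a b c
    have hsum : ∑ i, (P i x y z) ⊗ₜ[K] (Q i a b c)
        = ∑ k, (∑ i, cf i k • P i x y z) ⊗ₜ[K] (bS k : B) := by
      have e1 : ∀ i, P i x y z ⊗ₜ[K] Q i a b c
          = ∑ k, (cf i k • P i x y z) ⊗ₜ[K] (bS k : B) := by
        intro i
        rw [show Q i a b c = w i from rfl, hw_eq i, tmul_sum]
        exact Finset.sum_congr rfl fun k _ => by
          rw [TensorProduct.tmul_smul, TensorProduct.smul_tmul']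
      rw [Finset.sum_congr rfl fun i _ => e1 i, Finset.sum_comm]
      exact Finset.sum_congr rfl fun k _ => (TensorProduct.sum_tmul _ _ _).symm
    rw [hsum] at h0
    exact tmul_sum_eq_zero_of_indep hindep h0 k
  have hzero : ∀ k : Fin n, ∑ i, cf i k • P i = 0 := by
    intro k
    funext x y z
    have := hcoef k x y z
    simpa [Finset.sum_apply, Pi.smul_apply] using this
  have hcf : ∀ i k, cf i k = 0 := by
    intro i k
    exact (Fintype.linearIndependent_iff.mp hP) (fun i => cf i k) (hzero k) i
  intro i
  rw [hw_eq i]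
  simp [hcf]

end Separation

section Decomp

variable {K A B : Type*} [Field K]
  [AddCommGroup A] [Module K A] [AddCommGroup B] [Module K B] [Module.Finite K A]

lemma basis_tensor_expansion (bA : Module.Basis (Fin (Module.finrank K A)) K A)
    (u : A ⊗[K] B) :
    ∑ i, (bA i) ⊗ₜ[K] (((TensorProduct.lid K B).toLinearMap ∘ₗ
      (LinearMap.rTensor B (bA.coord i))) u) = u := by
  induction u using TensorProduct.induction_on with
  | zero => simp
  | tmul x y =>
    simp only [LinearMap.comp_apply, LinearMap.rTensor_tmul, LinearEquiv.coe_toLinearMap,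
      TensorProduct.lid_tmul, Module.Basis.coord_apply]
    calc ∑ i, bA i ⊗ₜ[K] ((bA.repr x i) • y)
        = ∑ i, ((bA.repr x i) • bA i) ⊗ₜ[K] y := by
          exact Finset.sum_congr rfl fun i _ => by
            rw [TensorProduct.tmul_smul, TensorProduct.smul_tmul']
      _ = (∑ i, (bA.repr x i) • bA i) ⊗ₜ[K] y := (TensorProduct.sum_tmul _ _ _).symm
      _ = x ⊗ₜ[K] y := by rw [bA.sum_repr]
  | add u v hu hv =>
    simp only [map_add, TensorProduct.tmul_add, Finset.sum_add_distrib, hu, hv]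

lemma exists_tensor_decomposition (Φ : A ⊗[K] B →ₗ[K] A ⊗[K] B) :
    ∃ (ι : Type) (_ : Fintype ι) (θ : ι → (A →ₗ[K] A)) (δ : ι → (B →ₗ[K] B)),
      Φ = ∑ i, TensorProduct.map (θ i) (δ i) := by
  classical
  let bA := Module.finBasis K A
  let m := Module.finrank K A
  let ρ : Fin m → (A ⊗[K] B →ₗ[K] B) := fun i =>
    (TensorProduct.lid K B).toLinearMap ∘ₗ (LinearMap.rTensor B (bA.coord i))
  refine ⟨Fin m × Fin m, inferInstance,
    fun p => (bA.coord p.2).smulRight (bA p.1),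
    fun p => (ρ p.1) ∘ₗ Φ ∘ₗ ((TensorProduct.mk K A B) (bA p.2)), ?_⟩
  apply TensorProduct.ext'
  intro x y
  rw [LinearMap.sum_apply]
  symm
  rw [Fintype.sum_prod_type_right]
  calc ∑ j : Fin m, ∑ i : Fin m,
        TensorProduct.map ((bA.coord j).smulRight (bA i))
          ((ρ i) ∘ₗ Φ ∘ₗ ((TensorProduct.mk K A B) (bA j))) (x ⊗ₜ[K] y)
      = ∑ j : Fin m, (bA.repr x j) • Φ ((bA j) ⊗ₜ[K] y) := by
        apply Finset.sum_congr rfl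
        intro j _
        calc ∑ i : Fin m, TensorProduct.map ((bA.coord j).smulRight (bA i))
              ((ρ i) ∘ₗ Φ ∘ₗ ((TensorProduct.mk K A B) (bA j))) (x ⊗ₜ[K] y)
            = ∑ i : Fin m, (bA.repr x j) •
                ((bA i) ⊗ₜ[K] ((ρ i) (Φ ((bA j) ⊗ₜ[K] y)))) := by
              apply Finset.sum_congr rfl
              intro i _
              rw [TensorProduct.map_tmul]
              simp only [LinearMap.smulRight_apply, LinearMap.comp_apply,
                TensorProduct.mk_apply, Module.Basis.coord_apply]
              rw [TensorProduct.smul_tmul']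
          _ = (bA.repr x j) • ∑ i : Fin m, ((bA i) ⊗ₜ[K] ((ρ i) (Φ ((bA j) ⊗ₜ[K] y)))) := by
              rw [Finset.smul_sum]
          _ = (bA.repr x j) • Φ ((bA j) ⊗ₜ[K] y) := by
              rw [basis_tensor_expansion bA]
    _ = Φ ((∑ j, (bA.repr x j) • bA j) ⊗ₜ[K] y) := by
        rw [TensorProduct.sum_tmul, map_sum]
        exact Finset.sum_congr rfl fun j _ => by
          rw [← TensorProduct.smul_tmul', map_smul]
    _ = Φ (x ⊗ₜ[K] y) := by rw [bA.sum_repr]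

end Decomp

section MoreAux

variable {K : Type*} [Field K]

lemma exists_relative_compl {V : Type*} [AddCommGroup V] [Module K V] (W U : Submodule K V)
    (hWU : W ≤ U) : ∃ X : Submodule K V, X ≤ U ∧ W ⊓ X = ⊥ ∧ W ⊔ X = U := by
  obtain ⟨Y, hY⟩ := Submodule.exists_isCompl (Submodule.comap U.subtype W)
  refine ⟨Y.map U.subtype, Submodule.map_subtype_le U Y, ?_, ?_⟩
  · have hW : W = (Submodule.comap U.subtype W).map U.subtype := by
      rw [Submodule.map_comap_subtype, inf_eq_right.mpr hWU]
    rw [hW, ← Submodule.map_inf _ (Submodule.injective_subtype U), hY.inf_eq_bot,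
      Submodule.map_bot]
  · have hW : W = (Submodule.comap U.subtype W).map U.subtype := by
      rw [Submodule.map_comap_subtype, inf_eq_right.mpr hWU]
    rw [hW, ← Submodule.map_sup, hY.sup_eq_top, Submodule.map_subtype_top]

lemma submodule_basis_family {V : Type*} [AddCommGroup V] [Module K V] [FiniteDimensional K V]
    (X : Submodule K V) : ∃ (n : ℕ) (f : Fin n → V), LinearIndependent K f ∧
      Submodule.span K (Set.range f) = X := by
  let b := Module.finBasis K X
  refine ⟨Module.finrank K X, fun i => (b i : V), ?_, ?_⟩
  · exact b.linearIndependent.map' X.subtype (Submodule.ker_subtype X)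
  · have : Set.range (fun i => (b i : V)) = X.subtype '' (Set.range b) := by
      rw [← Set.range_comp]; rfl
    rw [this, ← Submodule.map_span, b.span_eq, Submodule.map_subtype_top]

variable {A B : Type*} [AddCommGroup A] [Module K A] [AddCommGroup B] [Module K B]

lemma redistribute {ι κ : Type*} [Fintype ι] [Fintype κ]
    (bE : Module.Basis ι K (A →ₗ[K] A)) (θ : κ → (A →ₗ[K] A)) (δ : κ → (B →ₗ[K] B)) :
    ∃ γ : ι → (B →ₗ[K] B),
      ∑ k, TensorProduct.map (θ k) (δ k) = ∑ i, TensorProduct.map (bE i) (γ i) := by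
  classical
  refine ⟨fun i => ∑ k, (bE.repr (θ k) i) • δ k, ?_⟩
  have step1 : ∀ k, TensorProduct.map (θ k) (δ k)
      = ∑ i, TensorProduct.map (bE i) ((bE.repr (θ k) i) • δ k) := by
    intro k
    rw [← TensorProduct.mapBilinear_apply, ← bE.sum_repr (θ k), map_sum,
      LinearMap.sum_apply]
    apply Finset.sum_congr rfl
    intro i _
    rw [bE.sum_repr (θ k), map_smul, LinearMap.smul_apply, TensorProduct.mapBilinear_apply]
    have : TensorProduct.map (bE i) ((bE.repr (θ k) i) • δ k)
        = (bE.repr (θ k) i) • TensorProduct.map (bE i) (δ k) := by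
      rw [← TensorProduct.mapBilinear_apply (R := K) (bE i) ((bE.repr (θ k) i) • δ k),
        ← TensorProduct.mapBilinear_apply (R := K) (bE i) (δ k), map_smul]
    rw [this]
  rw [Finset.sum_congr rfl fun k _ => step1 k, Finset.sum_comm]
  apply Finset.sum_congr rfl
  intro i _
  rw [← TensorProduct.mapBilinear_apply (R := K) (bE i), map_sum]
  apply Finset.sum_congr rfl
  intro k _
  rw [TensorProduct.mapBilinear_apply]

end MoreAux
theorem homLie_tensor_operadic (K A B : Type*) [Field K]
    [NonUnitalNonAssocRing A] [Module K A] [SMulCommClass K A A] [IsScalarTower K A A]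
    [NonUnitalNonAssocRing B] [Module K B] [SMulCommClass K B B] [IsScalarTower K B B]
    [Module.Finite K A]
    (h2 : (2 : K) ≠ 0) (h3 : (3 : K) ≠ 0)
    (hcomm : ∀ x y : A, x * y = y * x)
    (hanti : ∀ a b : B, a * b = -(b * a))
    (Br : (A ⊗[K] B) →ₗ[K] (A ⊗[K] B) →ₗ[K] (A ⊗[K] B))
    (hBr : ∀ (x y : A) (a b : B),
      Br (x ⊗ₜ a) (y ⊗ₜ b) = (x * y) ⊗ₜ (a * b) - (y * x) ⊗ₜ (b * a))
    (Φ : A ⊗[K] B →ₗ[K] A ⊗[K] B) :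
    (∀ u v w : A ⊗[K] B,
        Br (Br u v) (Φ w) + Br (Br w u) (Φ v) + Br (Br v w) (Φ u) = 0) ↔
      Φ ∈ Submodule.span K
        { P : A ⊗[K] B →ₗ[K] A ⊗[K] B |
          ∃ (α : A →ₗ[K] A) (β : B →ₗ[K] B), P = TensorProduct.map α β ∧
            ((IsHomLie α ∧ IsHomCyclic β) ∨ IsHom2Nilpotent α ∨
              (IsHomCyclic α ∧ IsHomLie β) ∨ IsHom2Nilpotent β) } := by
  classical
  have h4 : (4 : K) ≠ 0 := by
    intro h
    apply h2
    have h22 : (2 : K) * 2 = 4 := by norm_num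
    rw [h] at h22
    exact mul_self_eq_zero.mp h22
  have br_pure : ∀ (x y : A) (a b : B) (p : A) (q : B),
      Br (Br (x ⊗ₜ a) (y ⊗ₜ b)) (p ⊗ₜ q)
        = (4 : K) • (((x * y) * p) ⊗ₜ[K] ((a * b) * q)) := by
    intro x y a b p q
    rw [hBr x y a b, map_sub, LinearMap.sub_apply, hBr, hBr]
    rw [hcomm y x, hanti b a, neg_mul, mul_neg, hcomm p (x * y), hanti q (a * b)]
    simp only [TensorProduct.tmul_neg, TensorProduct.neg_tmul, neg_neg, sub_neg_eq_add]
    module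
  constructor
  · intro H
    -- Step 1: decompose Φ as a sum of tensor products of maps
    obtain ⟨κ, hκ, θ, δ, hθδ⟩ := exists_tensor_decomposition (K := K) Φ
    have hEfin : Module.Finite K (A →ₗ[K] A) := Module.Finite.linearMap K K A A
    -- Step 2: submodules of endomorphisms
    set HL : Submodule K (A →ₗ[K] A) := LinearMap.ker (cyc3 (K := K) (A := A)) with hHL
    set HC : Submodule K (A →ₗ[K] A) := LinearMap.ker (dz3 (K := K) (A := A)) with hHC
    obtain ⟨X1, hX1U, hX1inf, hX1sup⟩ := exists_relative_compl (HL ⊓ HC) HL inf_le_left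
    obtain ⟨X2, hX2U, hX2inf, hX2sup⟩ := exists_relative_compl (HL ⊓ HC) HC inf_le_right
    obtain ⟨X0, hX0⟩ := Submodule.exists_isCompl (HL ⊔ X2)
    have hX2HL : X2 ⊓ HL = ⊥ := by
      rw [eq_bot_iff]
      intro v hv
      have hv2 : v ∈ X2 := (Submodule.mem_inf.mp hv).1
      have hvL : v ∈ HL := (Submodule.mem_inf.mp hv).2
      rw [← hX2inf]
      exact Submodule.mem_inf.mpr ⟨Submodule.mem_inf.mpr ⟨hvL, hX2U hv2⟩, hv2⟩
    have hHCle : HC ≤ HL ⊔ X2 := by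
      rw [← hX2sup]
      exact sup_le (inf_le_left.trans le_sup_left) le_sup_right
    have d1 : Disjoint HL (X2 ⊔ X0) := by
      rw [Submodule.disjoint_def]
      intro v hvL hv20
      obtain ⟨a, ha2, b, hb0, hab⟩ := Submodule.mem_sup.mp hv20
      have hb : b ∈ (HL ⊔ X2) ⊓ X0 := by
        refine Submodule.mem_inf.mpr ⟨?_, hb0⟩
        have hba : b = v - a := by rw [← hab]; abel
        rw [hba]
        exact Submodule.sub_mem _ (Submodule.mem_sup_left hvL) (Submodule.mem_sup_right ha2)
      rw [hX0.inf_eq_bot, Submodule.mem_bot] at hb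
      have hva : v = a := by rw [← hab, hb, add_zero]
      have : v ∈ X2 ⊓ HL := Submodule.mem_inf.mpr ⟨hva ▸ ha2, hvL⟩
      rw [hX2HL, Submodule.mem_bot] at this
      exact this
    have d2 : Disjoint HC (X1 ⊔ X0) := by
      rw [Submodule.disjoint_def]
      intro v hvC hv10
      obtain ⟨a, ha1, b, hb0, hab⟩ := Submodule.mem_sup.mp hv10
      have hb : b ∈ (HL ⊔ X2) ⊓ X0 := by
        refine Submodule.mem_inf.mpr ⟨?_, hb0⟩
        have hba : b = v - a := by rw [← hab]; abel
        rw [hba]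
        exact Submodule.sub_mem _ (hHCle hvC) (Submodule.mem_sup_left (hX1U ha1))
      rw [hX0.inf_eq_bot, Submodule.mem_bot] at hb
      have hva : v = a := by rw [← hab, hb, add_zero]
      have : v ∈ (HL ⊓ HC) ⊓ X1 :=
        Submodule.mem_inf.mpr ⟨Submodule.mem_inf.mpr ⟨hX1U (hva ▸ ha1), hvC⟩, hva ▸ ha1⟩
      rw [hX1inf, Submodule.mem_bot] at this
      exact this
    -- Step 3: adapted basis
    obtain ⟨nn, fn, lin_, spn⟩ := submodule_basis_family (HL ⊓ HC)
    obtain ⟨n1, f1b, li1, sp1⟩ := submodule_basis_family X1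
    obtain ⟨n2, f2b, li2, sp2⟩ := submodule_basis_family X2
    obtain ⟨n0, f0b, li0, sp0⟩ := submodule_basis_family X0
    set eL : (Fin nn ⊕ Fin n1) → (A →ₗ[K] A) := Sum.elim fn f1b with heL
    set eR : (Fin n2 ⊕ Fin n0) → (A →ₗ[K] A) := Sum.elim f2b f0b with heR
    set ee : ((Fin nn ⊕ Fin n1) ⊕ (Fin n2 ⊕ Fin n0)) → (A →ₗ[K] A) := Sum.elim eL eR
      with hee
    have spanL : Submodule.span K (Set.range eL) = HL := by
      rw [heL, Set.Sum.elim_range, Submodule.span_union, spn, sp1, hX1sup]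
    have spanR : Submodule.span K (Set.range eR) = X2 ⊔ X0 := by
      rw [heR, Set.Sum.elim_range, Submodule.span_union, sp2, sp0]
    have liL : LinearIndependent K eL :=
      lin_.sum_type li1 (by rw [spn, sp1]; exact disjoint_iff.mpr hX1inf)
    have liR : LinearIndependent K eR :=
      li2.sum_type li0 (by rw [sp2, sp0]; exact hX0.disjoint.mono_left le_sup_right)
    have liE : LinearIndependent K ee :=
      liL.sum_type liR (by rw [spanL, spanR]; exact d1)
    have spanE : ⊤ ≤ Submodule.span K (Set.range ee) := by
      rw [hee, Set.Sum.elim_range, Submodule.span_union, spanL, spanR, ← sup_assoc,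
        hX0.sup_eq_top]
    obtain ⟨γ, hγ⟩ := redistribute (Module.Basis.mk liE spanE) θ δ
    have hΦ : Φ = ∑ i, TensorProduct.map (ee i) (γ i) := by
      rw [hθδ, hγ]
      exact Finset.sum_congr rfl fun i _ => by rw [Module.Basis.mk_apply]
    -- Step 4: the key pointwise formula
    have Θkey : ∀ (x y z : A) (a b c : B),
        Br (Br (x ⊗ₜ a) (y ⊗ₜ b)) (Φ (z ⊗ₜ c))
          = (4 : K) • ∑ i, ((x * y) * (ee i z)) ⊗ₜ[K] ((a * b) * (γ i c)) := by
      intro x y z a b c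
      have hzc : Φ (z ⊗ₜ c) = ∑ i, (ee i z) ⊗ₜ[K] (γ i c) := by
        rw [hΦ, LinearMap.sum_apply]
        exact Finset.sum_congr rfl fun i _ => TensorProduct.map_tmul (ee i) (γ i) z c
      rw [hzc, map_sum, Finset.smul_sum]
      exact Finset.sum_congr rfl fun i _ => br_pure x y a b (ee i z) (γ i c)
    -- Step 5: conditions
    have hNf : ∀ (x y z : A) (a b c : B),
        (∑ i, ((x * y) * (ee i z)) ⊗ₜ[K] ((a * b) * (γ i c)))
          + (∑ i, ((z * x) * (ee i y)) ⊗ₜ[K] ((c * a) * (γ i b)))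
          + (∑ i, ((y * z) * (ee i x)) ⊗ₜ[K] ((b * c) * (γ i a))) = 0 := by
      intro x y z a b c
      apply smul_cancel_of_ne_zero h4
      rw [smul_add, smul_add, ← Θkey x y z a b c, ← Θkey z x y c a b, ← Θkey y z x b c a]
      exact H (x ⊗ₜ a) (y ⊗ₜ b) (z ⊗ₜ c)
    have hAf : ∀ (x y z : A) (a b c : B),
        (∑ i, ((x * y) * (ee i z)) ⊗ₜ[K] ((a * b) * (γ i c)))
          + (∑ i, ((z * x) * (ee i y)) ⊗ₜ[K] ((b * c) * (γ i a)))
          + (∑ i, ((y * z) * (ee i x)) ⊗ₜ[K] ((c * a) * (γ i b))) = 0 := by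
      intro x y z a b c
      have h0 := hNf y x z a b c
      simp only [hcomm y x, hcomm z y, hcomm x z] at h0
      linear_combination (norm := module) h0
    have cond1 : ∀ (x y z : A) (a b c : B),
        ∑ i, (cyc3 (ee i) x y z) ⊗ₜ[K] (cyc3 (γ i) a b c) = (0 : A ⊗[K] B) := by
      intro x y z a b c
      simp only [cyc3, LinearMap.coe_mk, AddHom.coe_mk, TensorProduct.add_tmul,
        TensorProduct.tmul_add, Finset.sum_add_distrib]
      linear_combination (norm := module) hNf x y z a b c + hNf x y z c a b
        + hNf x y z b c a
    have cond2 : ∀ (x y z : A) (a b c : B),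
        ∑ i, (dz3 (ee i) x y z) ⊗ₜ[K] (dz3 (γ i) a b c) = (0 : A ⊗[K] B) := by
      intro x y z a b c
      have perI : ∀ i, (dz3 (ee i) x y z) ⊗ₜ[K] (dz3 (γ i) a b c)
          = (4 : K) • (((x * y) * (ee i z)) ⊗ₜ[K] ((a * b) * (γ i c)))
            - (2 : K) • (((x * y) * (ee i z)) ⊗ₜ[K] ((c * a) * (γ i b)))
            - (2 : K) • (((x * y) * (ee i z)) ⊗ₜ[K] ((b * c) * (γ i a)))
            - (2 : K) • (((z * x) * (ee i y)) ⊗ₜ[K] ((a * b) * (γ i c)))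
            + ((z * x) * (ee i y)) ⊗ₜ[K] ((c * a) * (γ i b))
            + ((z * x) * (ee i y)) ⊗ₜ[K] ((b * c) * (γ i a))
            - (2 : K) • (((y * z) * (ee i x)) ⊗ₜ[K] ((a * b) * (γ i c)))
            + ((y * z) * (ee i x)) ⊗ₜ[K] ((c * a) * (γ i b))
            + ((y * z) * (ee i x)) ⊗ₜ[K] ((b * c) * (γ i a)) := by
        intro i
        simp only [dz3, LinearMap.coe_mk, AddHom.coe_mk]
        simp only [TensorProduct.sub_tmul, TensorProduct.tmul_sub, ← TensorProduct.smul_tmul',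
          TensorProduct.tmul_smul, smul_sub, smul_smul]
        module
      rw [Finset.sum_congr rfl fun i _ => perI i]
      simp only [Finset.sum_add_distrib, Finset.sum_sub_distrib, ← Finset.smul_sum]
      linear_combination (norm := module) (3 : K) • (hAf x y z a b c) + hNf x y z a b c
        - (2 : K) • (hNf x y z c a b) - (2 : K) • (hNf x y z b c a)
    -- Step 6: separation
    have memHL : ∀ j : Fin nn ⊕ Fin n1, ee (Sum.inl j) ∈ HL := by
      intro j
      cases j with
      | inl k =>
        have : fn k ∈ HL ⊓ HC := by rw [← spn]; exact Submodule.subset_span ⟨k, rfl⟩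
        exact this.1
      | inr k =>
        exact hX1U (by rw [← sp1]; exact Submodule.subset_span ⟨k, rfl⟩)
    have memHC : ∀ j, (Sum.elim f1b f0b : Fin n1 ⊕ Fin n0 → _) j ∈ X1 ⊔ X0 := by
      intro j
      cases j with
      | inl k => exact Submodule.mem_sup_left (by rw [← sp1]; exact Submodule.subset_span ⟨k, rfl⟩)
      | inr k => exact Submodule.mem_sup_right (by rw [← sp0]; exact Submodule.subset_span ⟨k, rfl⟩)
    -- 6a: from cond1
    have liRc : LinearIndependent K (⇑(cyc3 (K := K) (A := A)) ∘ eR) :=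
      liR.map (by rw [spanR, hHL] at *; exact (by rw [← hHL]; exact d1.symm))
    have cond1R : ∀ (x y z : A) (a b c : B),
        ∑ j, ((⇑(cyc3 (K := K) (A := A)) ∘ eR) j x y z) ⊗ₜ[K]
          ((fun j => cyc3 (γ (Sum.inr j))) j a b c) = (0 : A ⊗[K] B) := by
      intro x y z a b c
      have h0 := cond1 x y z a b c
      rw [Fintype.sum_sum_type] at h0
      have hz : ∑ j : Fin nn ⊕ Fin n1,
          (cyc3 (ee (Sum.inl j)) x y z) ⊗ₜ[K] (cyc3 (γ (Sum.inl j)) a b c) = 0 :=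
        Finset.sum_eq_zero fun j _ => by
          rw [LinearMap.mem_ker.mp (memHL j)]
          simp
      rw [hz, zero_add] at h0
      exact h0
    have sep1 : ∀ j : Fin n2 ⊕ Fin n0, cyc3 (γ (Sum.inr j)) = 0 :=
      separation liRc (fun j => cyc3 (γ (Sum.inr j))) cond1R
    -- 6b: from cond2
    have liP2 : LinearIndependent K (⇑(dz3 (K := K) (A := A)) ∘ (Sum.elim f1b f0b)) := by
      have li10 : LinearIndependent K (Sum.elim f1b f0b) :=
        li1.sum_type li0 (by
          rw [sp1, sp0]
          exact hX0.disjoint.mono_left (le_trans hX1U le_sup_left))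
      refine li10.map ?_
      rw [show Submodule.span K (Set.range (Sum.elim f1b f0b)) = X1 ⊔ X0 by
        rw [Set.Sum.elim_range, Submodule.span_union, sp1, sp0]]
      exact d2.symm
    have cond2R : ∀ (x y z : A) (a b c : B),
        ∑ j, ((⇑(dz3 (K := K) (A := A)) ∘ (Sum.elim f1b f0b)) j x y z) ⊗ₜ[K]
          ((Sum.elim (fun k => dz3 (γ (Sum.inl (Sum.inr k))))
            (fun k => dz3 (γ (Sum.inr (Sum.inr k))))) j a b c) = (0 : A ⊗[K] B) := by
      intro x y z a b c
      have h0 := cond2 x y z a b c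
      rw [Fintype.sum_sum_type] at h0
      rw [Fintype.sum_sum_type (fun j => (dz3 (ee (Sum.inl j)) x y z) ⊗ₜ[K]
        (dz3 (γ (Sum.inl j)) a b c))] at h0
      rw [Fintype.sum_sum_type (fun j => (dz3 (ee (Sum.inr j)) x y z) ⊗ₜ[K]
        (dz3 (γ (Sum.inr j)) a b c))] at h0
      have memn : ∀ k : Fin nn, fn k ∈ HC := by
        intro k
        have : fn k ∈ HL ⊓ HC := by rw [← spn]; exact Submodule.subset_span ⟨k, rfl⟩
        exact this.2
      have mem2 : ∀ k : Fin n2, f2b k ∈ HC := by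
        intro k
        exact hX2U (by rw [← sp2]; exact Submodule.subset_span ⟨k, rfl⟩)
      have hzn : ∑ k : Fin nn,
          (dz3 (ee (Sum.inl (Sum.inl k))) x y z) ⊗ₜ[K] (dz3 (γ (Sum.inl (Sum.inl k))) a b c)
            = 0 :=
        Finset.sum_eq_zero fun k _ => by
          rw [show dz3 (ee (Sum.inl (Sum.inl k))) = 0 from LinearMap.mem_ker.mp (memn k)]
          simp
      have hz2 : ∑ k : Fin n2,
          (dz3 (ee (Sum.inr (Sum.inl k))) x y z) ⊗ₜ[K] (dz3 (γ (Sum.inr (Sum.inl k))) a b c)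
            = 0 :=
        Finset.sum_eq_zero fun k _ => by
          rw [show dz3 (ee (Sum.inr (Sum.inl k))) = 0 from LinearMap.mem_ker.mp (mem2 k)]
          simp
      rw [hzn, hz2, zero_add, zero_add] at h0
      rw [Fintype.sum_sum_type]
      exact h0
    have sep2 : ∀ j : Fin n1 ⊕ Fin n0,
        (Sum.elim (fun k => dz3 (γ (Sum.inl (Sum.inr k))))
          (fun k => dz3 (γ (Sum.inr (Sum.inr k))))) j = 0 :=
      separation liP2 _ cond2R
    -- Step 7: assembly
    rw [hΦ]
    apply Submodule.sum_mem
    intro i _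
    apply Submodule.subset_span
    rcases i with (k | k) | (k | k)
    · -- Wcap : Hom-2-nilpotent on A
      have hmemc : fn k ∈ HL ⊓ HC := by rw [← spn]; exact Submodule.subset_span ⟨k, rfl⟩
      refine ⟨_, _, rfl, Or.inr (Or.inl ?_)⟩
      exact hom2nil_of h3 (cyc3_eq_zero_iff.mp (LinearMap.mem_ker.mp hmemc.1))
        (dz3_eq_zero_iff h3 |>.mp (LinearMap.mem_ker.mp hmemc.2))
    · -- X1 : (Hom-Lie, Hom-cyclic)
      have hl : IsHomLie (ee (Sum.inl (Sum.inr k))) :=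
        cyc3_eq_zero_iff.mp (LinearMap.mem_ker.mp (memHL (Sum.inr k)))
      have hcg : IsHomCyclic (γ (Sum.inl (Sum.inr k))) :=
        (dz3_eq_zero_iff h3).mp (sep2 (Sum.inl k))
      exact ⟨_, _, rfl, Or.inl ⟨hl, hcg⟩⟩
    · -- X2 : (Hom-cyclic, Hom-Lie)
      have hmem2 : f2b k ∈ HC := hX2U (by rw [← sp2]; exact Submodule.subset_span ⟨k, rfl⟩)
      have hc : IsHomCyclic (ee (Sum.inr (Sum.inl k))) :=
        (dz3_eq_zero_iff h3).mp (LinearMap.mem_ker.mp hmem2)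
      have hlg : IsHomLie (γ (Sum.inr (Sum.inl k))) :=
        cyc3_eq_zero_iff.mp (sep1 (Sum.inl k))
      exact ⟨_, _, rfl, Or.inr (Or.inr (Or.inl ⟨hc, hlg⟩))⟩
    · -- X0 : Hom-2-nilpotent on B
      have hlg : IsHomLie (γ (Sum.inr (Sum.inr k))) :=
        cyc3_eq_zero_iff.mp (sep1 (Sum.inr k))
      have hcg : IsHomCyclic (γ (Sum.inr (Sum.inr k))) :=
        (dz3_eq_zero_iff h3).mp (sep2 (Sum.inr k))
      exact ⟨_, _, rfl, Or.inr (Or.inr (Or.inr (hom2nil_of h3 hlg hcg)))⟩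

  · -- easy direction
    intro hmem
    refine Submodule.span_induction (p := fun Ψ _ => ∀ u v w : A ⊗[K] B,
        Br (Br u v) (Ψ w) + Br (Br w u) (Ψ v) + Br (Br v w) (Ψ u) = 0) ?_ ?_ ?_ ?_ hmem
    · rintro P ⟨α, β, rfl, hcase⟩
      have key : ∀ (x y z : A) (a b c : B),
          ((x * y) * α z) ⊗ₜ[K] ((a * b) * β c) + ((z * x) * α y) ⊗ₜ[K] ((c * a) * β b)
            + ((y * z) * α x) ⊗ₜ[K] ((b * c) * β a) = (0 : A ⊗[K] B) := by
        intro x y z a b c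
        rcases hcase with ⟨hα, hβ⟩ | hα | ⟨hα, hβ⟩ | hβ
        · rw [hβ c a b, hβ b c a, ← TensorProduct.add_tmul, ← TensorProduct.add_tmul,
            hα x y z, TensorProduct.zero_tmul]
        · rw [hα x y z, hα z x y, hα y z x]
          simp
        · rw [hα z x y, hα y z x, ← TensorProduct.tmul_add, ← TensorProduct.tmul_add,
            hβ a b c, TensorProduct.tmul_zero]
        · rw [hβ a b c, hβ c a b, hβ b c a]
          simp
      intro u v w
      induction u using TensorProduct.induction_on with
      | zero => simp
      | add u1 u2 h1 h2 =>
        simp only [map_add, LinearMap.add_apply]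
        linear_combination (norm := module) h1 + h2
      | tmul x a =>
        induction v using TensorProduct.induction_on with
        | zero => simp
        | add v1 v2 h1 h2 =>
          simp only [map_add, LinearMap.add_apply]
          linear_combination (norm := module) h1 + h2
        | tmul y b =>
          induction w using TensorProduct.induction_on with
          | zero => simp
          | add w1 w2 h1 h2 =>
            simp only [map_add, LinearMap.add_apply]
            linear_combination (norm := module) h1 + h2
          | tmul z c =>
            rw [TensorProduct.map_tmul, TensorProduct.map_tmul, TensorProduct.map_tmul,
              br_pure, br_pure, br_pure]
            rw [← smul_add, ← smul_add, key x y z a b c, smul_zero]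
    · intro u v w; simp
    · intro P Q _ _ hP hQ u v w
      simp only [LinearMap.add_apply, map_add]
      linear_combination (norm := module) hP u v w + hQ u v w
    · intro c P _ hP u v w
      simp only [LinearMap.smul_apply, map_smul]
      rw [← smul_add, ← smul_add, hP u v w, smul_zero]
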